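/- arXiv:2012.14038 — 7 statements merged into one kernel-verified Lean document; each statement's English description precedes it below -/
import Mathlib

section
/- Let A = A₁ × ⋯ × A_k be a finite product of nonzero commutative integral domains and let τ₁, …, τ_k ∈ A satisfy that each τ_i is not nilpotent and τ_i·τ_j is nilpotent for i ≠ j. Then there is a (unique) bijection σ of {1,…,k} such that for each i the component of τ_{σ(i)} in A_i is nonzero, while the component of τ_{σ(j)} in A_i is zero for all j ≠ i. -/
/-- A maximal Thom system in a product of `k` nonzero integral domains singles out
exactly one factor per element, via a unique permutation. -/
theorem stmt_2 (k : ℕ) (A : Fin k → Type*) [∀ i, CommRing (A i)]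
    [∀ i, IsDomain (A i)] (τ : Fin k → (∀ i, A i))
    (hnn : ∀ m, ¬ IsNilpotent (τ m))
    (hpair : ∀ m m', m ≠ m' → IsNilpotent (τ m * τ m')) :
    ∃! σ : Equiv.Perm (Fin k), ∀ i : Fin k,
      (τ (σ i)) i ≠ 0 ∧ ∀ j : Fin k, j ≠ i → (τ (σ j)) i = 0 := by
  -- disjointness: if τ m i ≠ 0 and τ m' i ≠ 0 then m = m'
  have hdisj : ∀ m m' i, τ m i ≠ 0 → τ m' i ≠ 0 → m = m' := by
    intro m m' i hm hm'
    by_contra hne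
    have h := (hpair m m' hne).map (Pi.evalRingHom A i)
    rw [isNilpotent_iff_eq_zero] at h
    simp only [map_mul, Pi.evalRingHom_apply] at h
    rcases mul_eq_zero.mp h with h | h
    · exact hm h
    · exact hm' h
  -- each τ m has a nonzero component
  have hex : ∀ m, ∃ i, τ m i ≠ 0 := by
    intro m
    by_contra h
    push_neg at h
    apply hnn m
    have : τ m = 0 := funext fun i => h i
    simp [this]
  choose f hf using hex
  have hinj : Function.Injective f := fun m m' h => hdisj m m' (f m) (hf m) (h ▸ hf m')
  have hbij : Function.Bijective f := (Finite.injective_iff_bijective).mp hinj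
  let e := Equiv.ofBijective f hbij
  refine ⟨e.symm, fun i => ?_, fun σ' hσ' => ?_⟩
  · have hfe : f (e.symm i) = i := e.apply_symm_apply i
    constructor
    · rw [show (e.symm i : Fin k) = e.symm i from rfl]
      have := hf (e.symm i)
      rwa [hfe] at this
    · intro j hj
      by_contra hzero
      have h1 := hf (e.symm i); rw [hfe] at h1
      have : e.symm j = e.symm i := hdisj (e.symm j) (e.symm i) i hzero h1
      exact hj (e.symm.injective this)
  · apply Equiv.ext
    intro i
    have h1 := (hσ' i).1
    have hfe : f (e.symm i) = i := e.apply_symm_apply i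
    have h2 := hf (e.symm i); rw [hfe] at h2
    exact hdisj (σ' i) (e.symm i) i h1 h2
end

section
/- Let A = A₁ × ⋯ × A_k be a finite product of nonzero commutative integral domains. Then the standard idempotents e₁, …, e_k (where e_i has component 1 in A_i and 0 elsewhere) form a strict Thom system: each e_i is not nilpotent, e_i·e_j = 0 for i ≠ j, and any collection of elements of A such that each element is non-nilpotent and pairwise products are nilpotent has at most k elements. -/
/-- The standard idempotents in a finite product of `k` nonzero commutative integral
domains form a strict Thom system. -/
theorem stmt_3 (k : ℕ) (A : Fin k → Type*) [∀ i, CommRing (A i)]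
    [∀ i, IsDomain (A i)] (e : Fin k → (∀ i, A i))
    (he : ∀ i j, e i j = if i = j then 1 else 0) :
    (∀ i, ¬ IsNilpotent (e i)) ∧
    (∀ i j, i ≠ j → e i * e j = 0) ∧
    (∀ (l : ℕ) (τ : Fin l → (∀ i, A i)),
      (∀ m, ¬ IsNilpotent (τ m)) →
      (∀ m m', m ≠ m' → IsNilpotent (τ m * τ m')) → l ≤ k) := by
  refine ⟨?_, ?_, ?_⟩
  · intro i ⟨n, hn⟩
    have : (e i i) ^ n = 0 := by
      have := congrFun hn i
      simpa using this
    rw [he i i, if_pos rfl, one_pow] at this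
    exact one_ne_zero this
  · intro i j hij
    funext x
    simp only [Pi.mul_apply, Pi.zero_apply, he]
    by_cases h : i = x
    · have : j ≠ x := fun hj => hij (h.trans hj.symm)
      rw [if_neg this]; simp
    · rw [if_neg h]; simp
  · intro l τ hnn hpair
    have key : ∀ m, ∃ i, τ m i ≠ 0 := by
      intro m
      by_contra h
      push_neg at h
      exact hnn m ⟨1, by funext i; simpa using h i⟩
    choose f hf using key
    have hinj : Function.Injective f := by
      intro m m' hmm
      by_contra hne
      obtain ⟨n, hn⟩ := hpair m m' hne
      have h0 : (τ m (f m) * τ m' (f m)) ^ n = 0 := by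
        have := congrFun hn (f m)
        simpa using this
      have : τ m (f m) * τ m' (f m) = 0 :=
        isNilpotent_iff_eq_zero.mp ⟨n, h0⟩
      rcases mul_eq_zero.mp this with h | h
      · exact hf m h
      · exact hf m' (hmm ▸ h)
    simpa using Fintype.card_le_of_injective f hinj
end

section
/- Let S be a commutative ring graded in nonnegative degrees and A a graded commutative S-algebra (with S mapping to A by a degree-preserving homomorphism). Suppose A is generated as an S-module by finitely many homogeneous elements, all of degree at most d. Then any product of d+1 homogeneous elements of A of positive degree lies in S⁺·A, where S⁺ ⊂ S is the ideal of elements of positive degree. Consequently (A⁺)^{d+1} ⊆ S⁺·A, where A⁺ is the ideal of A generated by homogeneous elements of positive degree. -/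
/-- If a graded commutative `S`-algebra `A` (with `S` graded in nonnegative degrees and
the structure map degree-preserving) is generated as an `S`-module by finitely many
homogeneous elements of degree at most `d`, then any product of `d+1` homogeneous
positive-degree elements of `A` lies in `S⁺·A`; consequently `(A⁺)^(d+1) ⊆ S⁺·A`. -/
theorem stmt_4 (S A : Type*) [CommRing S] [CommRing A] [Algebra S A]
    (𝒮 : ℕ → AddSubgroup S) [GradedRing 𝒮]
    (𝒜 : ℕ → AddSubgroup A) [GradedRing 𝒜]
    (hcompat : ∀ (n : ℕ) (s : S), s ∈ 𝒮 n → algebraMap S A s ∈ 𝒜 n)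
    (d : ℕ) (gens : Finset A)
    (hdeg : ∀ m ∈ gens, ∃ j ≤ d, m ∈ 𝒜 j)
    (hspan : Submodule.span S (gens : Set A) = ⊤) :
    (∀ f : Fin (d + 1) → A, (∀ i, ∃ n, 0 < n ∧ f i ∈ 𝒜 n) →
      (∏ i, f i) ∈ Ideal.span ((algebraMap S A) '' {s : S | ∃ n, 0 < n ∧ s ∈ 𝒮 n})) ∧
    (Ideal.span {a : A | ∃ n, 0 < n ∧ a ∈ 𝒜 n}) ^ (d + 1) ≤
      Ideal.span ((algebraMap S A) '' {s : S | ∃ n, 0 < n ∧ s ∈ 𝒮 n}) := by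
  classical
  set I : Ideal A := Ideal.span ((algebraMap S A) '' {s : S | ∃ n, 0 < n ∧ s ∈ 𝒮 n}) with hI
  -- I is a homogeneous ideal
  have hIhom : I.IsHomogeneous 𝒜 := by
    refine Ideal.homogeneous_span 𝒜 _ ?_
    rintro x ⟨s, ⟨n, _, hs⟩, rfl⟩
    exact ⟨n, hcompat n s hs⟩
  -- key: every degree-n component with n > d lies in I
  have key : ∀ a : A, ∀ n, d < n → (DirectSum.decompose 𝒜 a n : A) ∈ I := by
    intro a
    have ha : a ∈ Submodule.span S (gens : Set A) := hspan ▸ Submodule.mem_top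
    induction ha using Submodule.span_induction with
    | mem x hx =>
      intro n hn
      obtain ⟨j, hj, hxj⟩ := hdeg x hx
      rw [DirectSum.decompose_of_mem_ne 𝒜 hxj (by omega)]
      exact I.zero_mem
    | zero => intro n _; simp
    | add x y _ _ hx hy =>
      intro n hn
      rw [DirectSum.decompose_add]
      exact add_mem (hx n hn) (hy n hn)
    | smul s x _ hx =>
      intro n hn
      have hsx : s • x = algebraMap S A s * x := Algebra.smul_def s x
      -- decompose s into homogeneous components
      have hs : s = ∑ k ∈ (DirectSum.decompose 𝒮 s).support, (DirectSum.decompose 𝒮 s k : S) :=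
        (DirectSum.sum_support_decompose 𝒮 s).symm
      rw [hsx]
      have heq : (DirectSum.decompose 𝒜 (algebraMap S A s * x) n : A)
          = ∑ k ∈ (DirectSum.decompose 𝒮 s).support,
            (DirectSum.decompose 𝒜 (algebraMap S A (DirectSum.decompose 𝒮 s k : S) * x) n : A) := by
        conv_lhs => rw [hs]
        rw [map_sum, Finset.sum_mul]
        rw [← GradedRing.proj_apply, map_sum]
        simp_rw [GradedRing.proj_apply]
      rw [heq]
      refine Submodule.sum_mem _ fun k _ => ?_
      rcases Nat.eq_zero_or_pos k with hk | hk
      · subst hk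
        rw [DirectSum.coe_decompose_mul_of_left_mem_of_le 𝒜
          (hcompat 0 _ (DirectSum.decompose 𝒮 s 0).2) (Nat.zero_le n)]
        exact I.mul_mem_left _ (by simpa using hx n hn)
      · have hmem : algebraMap S A (DirectSum.decompose 𝒮 s k : S) * x ∈ I := by
          refine I.mul_mem_right _ (Ideal.subset_span ?_)
          exact ⟨_, ⟨k, hk, (DirectSum.decompose 𝒮 s k).2⟩, rfl⟩
        exact hIhom n hmem
  have part1 : ∀ f : Fin (d + 1) → A, (∀ i, ∃ n, 0 < n ∧ f i ∈ 𝒜 n) → (∏ i, f i) ∈ I := by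
    intro f hf
    choose n hn hfn using hf
    have hprod : (∏ i, f i) ∈ 𝒜 (∑ i, n i) :=
      SetLike.prod_mem_graded 𝒜 n f (fun i _ => hfn i)
    have hd : d < ∑ i, n i := by
      calc d < d + 1 := Nat.lt_succ_self d
        _ = ∑ _i : Fin (d + 1), 1 := by simp
        _ ≤ ∑ i, n i := Finset.sum_le_sum fun i _ => hn i
    have := key (∏ i, f i) (∑ i, n i) hd
    rwa [DirectSum.decompose_of_mem_same 𝒜 hprod] at this
  refine ⟨part1, ?_⟩
  rw [Ideal.span, Submodule.span_pow, Submodule.span_le]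
  intro x hx
  rw [Set.mem_pow] at hx
  obtain ⟨f, rfl⟩ := hx
  rw [List.prod_ofFn]
  exact part1 (fun i => (f i : A)) (fun i => (f i).2)
end

section
/- Let P be a finite partially ordered set. Call an element c ∈ P ramified if either c is minimal in P, or there exist two distinct ramified elements d₁ ≠ d₂ with d₁ ≤ c and d₂ ≤ c such that c is minimal among all elements e ∈ P with d₁ ≤ e and d₂ ≤ e. Then for every x ∈ P, the set of ramified elements c with c ≤ x is nonempty and has a unique maximal element. -/
/-- An element `c` of a poset is ramified if it is minimal, or if it is minimal among
the elements lying above two distinct ramified elements. -/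
inductive Ramified {P : Type*} [PartialOrder P] : P → Prop
  | min (c : P) (h : ∀ d, d ≤ c → d = c) : Ramified c
  | step (c d₁ d₂ : P) (h₁ : Ramified d₁) (h₂ : Ramified d₂) (hne : d₁ ≠ d₂)
      (hle₁ : d₁ ≤ c) (hle₂ : d₂ ≤ c)
      (hmin : ∀ e, d₁ ≤ e → d₂ ≤ e → e ≤ c → e = c) : Ramified c

/-- In a finite poset, for every `x` the set of ramified elements below `x` is nonempty
and has a unique maximal element. -/
theorem stmt_6 {P : Type*} [PartialOrder P] [Fintype P] (x : P) :
    ∃! c : P, Ramified c ∧ c ≤ x ∧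
      ∀ c', Ramified c' → c' ≤ x → c ≤ c' → c' = c := by
  classical
  -- a minimal element below x
  obtain ⟨m, hm, hmmin⟩ := Set.Finite.exists_minimalFor id {y : P | y ≤ x}
    (Set.toFinite _) ⟨x, le_refl x⟩
  have hmram : Ramified m := Ramified.min m (fun d hd => le_antisymm hd (hmmin (le_trans hd hm) hd))
  -- the set of ramified elements below x is nonempty and finite; take a maximal one
  obtain ⟨c, hc, hcmax⟩ := Set.Finite.exists_maximalFor id
    {y : P | Ramified y ∧ y ≤ x} (Set.toFinite _) ⟨m, hmram, hm⟩
  have hmax : ∀ c', Ramified c' → c' ≤ x → c ≤ c' → c' = c :=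
    fun c' h1 h2 h3 => le_antisymm (hcmax ⟨h1, h2⟩ h3) h3
  refine ⟨c, ⟨hc.1, hc.2, hmax⟩, ?_⟩
  rintro c' ⟨hc'ram, hc'le, hc'max⟩
  by_contra hne
  -- take a minimal element of {e ≤ x : c' ≤ e, c ≤ e}
  obtain ⟨B, hB, hBmin⟩ := Set.Finite.exists_minimalFor id
    {e : P | c' ≤ e ∧ c ≤ e ∧ e ≤ x} (Set.toFinite _) ⟨x, hc'le, hc.2, le_refl x⟩
  obtain ⟨hB1, hB2, hB3⟩ := hB
  have hBram : Ramified B := Ramified.step B c' c hc'ram hc.1 hne hB1 hB2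
    (fun e he1 he2 he3 => le_antisymm he3 (hBmin ⟨he1, he2, le_trans he3 hB3⟩ he3))
  have h1 : B = c := hmax B hBram hB3 hB2
  have h2 : B = c' := hc'max B hBram hB3 hB1
  exact hne (h2 ▸ h1)
end

section
/- Let K be a field, R = K[x₁,…,x_n] a polynomial ring graded with each x_i in positive degree, and H a graded commutative K-algebra with H⁰ = K, H finite-dimensional over K, and H concentrated in nonnegative degrees. Let A = R ⊗_K H with the total grading. Suppose f, g ∈ R are homogeneous and coprime, and a, b, a', b' ∈ A are homogeneous elements with a·b = a'·b', such that a − f⊗1, a' − f⊗1, b − g⊗1, and b' − g⊗1 are all nilpotent in A. Then a = a' and b = b'. -/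
open TensorProduct

variable {K H : Type*} [Field K] [CommRing H] [Algebra K H]

/-- The degree-`m` part of the total grading on `K[x₁,…,x_n] ⊗ H`, where the
polynomial ring carries the weighted grading by `w` and `H` the grading `ℋ`. -/
noncomputable def tensorGrade {nv : ℕ} (w : Fin nv → ℕ) (ℋ : ℕ → Submodule K H) (m : ℕ) :
    Submodule K (MvPolynomial (Fin nv) K ⊗[K] H) :=
  Submodule.span K {z | ∃ i j, i + j = m ∧
    ∃ r ∈ MvPolynomial.weightedHomogeneousSubmodule K w i, ∃ h ∈ ℋ j, z = r ⊗ₜ[K] h}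

section PolyAux

variable {nv : ℕ} {w : Fin nv → ℕ}

private lemma degkill {f p : MvPolynomial (Fin nv) K} {df d : ℕ}
    (hf : MvPolynomial.IsWeightedHomogeneous w f df)
    (hp : MvPolynomial.IsWeightedHomogeneous w p d)
    (hlt : d < df) (hdvd : f ∣ p) : p = 0 := by
  classical
  obtain ⟨t, rfl⟩ := hdvd
  have ht := MvPolynomial.sum_weightedHomogeneousComponent w t
  rw [finsum_eq_sum _ (MvPolynomial.weightedHomogeneousComponent_finsupp t)] at ht
  set S := (MvPolynomial.weightedHomogeneousComponent_finsupp (w := w) t).toFinset with hS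
  have h2 : f * t = ∑ e ∈ S, f * MvPolynomial.weightedHomogeneousComponent w e t := by
    rw [← Finset.mul_sum, ht]
  have h1 : MvPolynomial.weightedHomogeneousComponent w d (f * t) = f * t :=
    hp.weightedHomogeneousComponent_same
  have h4 : ∀ e ∈ S, MvPolynomial.weightedHomogeneousComponent w d
      (f * MvPolynomial.weightedHomogeneousComponent w e t) = 0 := by
    intro e _
    refine MvPolynomial.IsWeightedHomogeneous.weightedHomogeneousComponent_ne d
      (hf.mul ((MvPolynomial.mem_weightedHomogeneousSubmodule _ _ _ _).mp
        (MvPolynomial.weightedHomogeneousComponent_mem w t e))) (by omega)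
  rw [← h1]
  conv_lhs => rw [h2]
  rw [map_sum, Finset.sum_eq_zero h4]

private lemma unit_deg {g : MvPolynomial (Fin nv) K} {m : ℕ}
    (hg : MvPolynomial.IsWeightedHomogeneous w g m) (hu : IsUnit g) : m = 0 := by
  by_contra hm
  have h0 : MvPolynomial.coeff 0 g = 0 := hg.coeff_eq_zero 0 (by rw [map_zero]; exact Ne.symm hm)
  have hc : IsUnit (MvPolynomial.constantCoeff g) := hu.map _
  rw [show MvPolynomial.constantCoeff g = MvPolynomial.coeff 0 g from rfl, h0] at hc
  exact not_isUnit_zero hc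

private lemma deg_pos (hw : ∀ i, 0 < w i) {f : MvPolynomial (Fin nv) K} {df : ℕ}
    (hf : MvPolynomial.IsWeightedHomogeneous w f df) (hnu : ¬ IsUnit f) (h0 : f ≠ 0) :
    0 < df := by
  rcases Nat.eq_zero_or_pos df with hdf | hdf
  · subst hdf
    exfalso
    have hC : f = MvPolynomial.C (MvPolynomial.coeff 0 f) := by
      apply MvPolynomial.ext
      intro d
      by_cases hd : d = 0
      · subst hd; simp [MvPolynomial.coeff_C]
      · rw [MvPolynomial.coeff_C, if_neg (Ne.symm hd)]
        by_contra hne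
        have hwd : Finsupp.weight w d = 0 := hf hne
        obtain ⟨i, hi⟩ : ∃ i, d i ≠ 0 := by
          by_contra hall
          push_neg at hall
          exact hd (Finsupp.ext hall)
        have hle := Finsupp.le_weight w (s := i) (Nat.pos_iff_ne_zero.mp (hw i)) d
        rw [hwd] at hle
        exact hi (Nat.le_zero.mp hle)
    set c := MvPolynomial.coeff 0 f with hc
    have hc0 : c ≠ 0 := fun h => h0 (by rw [hC, h, map_zero])
    refine hnu (isUnit_iff_exists_inv.mpr ⟨MvPolynomial.C c⁻¹, ?_⟩)
    rw [hC, ← map_mul, mul_inv_cancel₀ hc0, map_one]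
  · exact hdf

end PolyAux

section Aux

variable {nv : ℕ} (w : Fin nv → ℕ) (ℋ : ℕ → Submodule K H) [GradedAlgebra ℋ]

/-- Projection of `R ⊗ H` onto the `H`-degree-`j` part. -/
noncomputable def tQ (j : ℕ) :
    (MvPolynomial (Fin nv) K ⊗[K] H) →ₗ[K] (MvPolynomial (Fin nv) K ⊗[K] H) :=
  LinearMap.lTensor _ (GradedAlgebra.proj ℋ j)

lemma tQ_tmul (j : ℕ) (p : MvPolynomial (Fin nv) K) (h : H) :
    tQ ℋ j (p ⊗ₜ[K] h) = p ⊗ₜ[K] (GradedAlgebra.proj ℋ j h) := rfl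

private lemma proj_hom_mul {p q : ℕ} {x y : H} (hx : x ∈ ℋ p) (hy : y ∈ ℋ q) (j : ℕ) :
    GradedAlgebra.proj ℋ j (x * y) =
      ∑ i ∈ Finset.range (j + 1),
        GradedAlgebra.proj ℋ i x * GradedAlgebra.proj ℋ (j - i) y := by
  have hxy : x * y ∈ ℋ (p + q) := SetLike.mul_mem_graded hx hy
  by_cases hj : j = p + q
  · subst hj
    rw [GradedAlgebra.proj_apply, DirectSum.decompose_of_mem_same ℋ hxy]
    rw [Finset.sum_eq_single_of_mem p (by simp)]
    · rw [GradedAlgebra.proj_apply, DirectSum.decompose_of_mem_same ℋ hx,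
        Nat.add_sub_cancel_left, GradedAlgebra.proj_apply,
        DirectSum.decompose_of_mem_same ℋ hy]
    · intro i _ hne
      rw [GradedAlgebra.proj_apply, DirectSum.decompose_of_mem_ne ℋ hx (Ne.symm hne), zero_mul]
  · rw [GradedAlgebra.proj_apply, DirectSum.decompose_of_mem_ne ℋ hxy (Ne.symm hj)]
    symm
    apply Finset.sum_eq_zero
    intro i hi
    by_cases hip : i = p
    · subst hip
      have : j - i ≠ q := by simp at hi; omega
      rw [GradedAlgebra.proj_apply ℋ (j - i),
        DirectSum.decompose_of_mem_ne ℋ hy (Ne.symm this), mul_zero]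
    · rw [GradedAlgebra.proj_apply, DirectSum.decompose_of_mem_ne ℋ hx (Ne.symm hip), zero_mul]

private lemma proj_conv (j : ℕ) (x y : H) :
    GradedAlgebra.proj ℋ j (x * y) =
      ∑ i ∈ Finset.range (j + 1),
        GradedAlgebra.proj ℋ i x * GradedAlgebra.proj ℋ (j - i) y := by
  induction x using DirectSum.Decomposition.inductionOn ℋ with
  | zero => simp
  | @homogeneous p xp =>
    induction y using DirectSum.Decomposition.inductionOn ℋ with
    | zero => simp
    | @homogeneous q yq => exact proj_hom_mul ℋ xp.2 yq.2 j
    | add y1 y2 hy1 hy2 =>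
      rw [mul_add, map_add, hy1, hy2, ← Finset.sum_add_distrib]
      exact Finset.sum_congr rfl fun i _ => by rw [map_add, mul_add]
  | add x1 x2 hx1 hx2 =>
    rw [add_mul, map_add, hx1, hx2, ← Finset.sum_add_distrib]
    exact Finset.sum_congr rfl fun i _ => by rw [map_add, add_mul]

lemma tQ_mul (j : ℕ) (x y : MvPolynomial (Fin nv) K ⊗[K] H) :
    tQ ℋ j (x * y) = ∑ i ∈ Finset.range (j + 1), tQ ℋ i x * tQ ℋ (j - i) y := by
  induction x using TensorProduct.induction_on with
  | zero => simp
  | tmul p h =>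
    induction y using TensorProduct.induction_on with
    | zero => simp
    | tmul q h' =>
      rw [Algebra.TensorProduct.tmul_mul_tmul, tQ_tmul, proj_conv, tmul_sum]
      exact Finset.sum_congr rfl fun i _ => by
        rw [tQ_tmul, tQ_tmul, Algebra.TensorProduct.tmul_mul_tmul]
    | add y1 y2 hy1 hy2 =>
      rw [mul_add, map_add, hy1, hy2, ← Finset.sum_add_distrib]
      exact Finset.sum_congr rfl fun i _ => by rw [map_add, mul_add]
  | add x1 x2 hx1 hx2 =>
    rw [add_mul, map_add, hx1, hx2, ← Finset.sum_add_distrib]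
    exact Finset.sum_congr rfl fun i _ => by rw [map_add, add_mul]

private lemma proj_zero_one : GradedAlgebra.proj ℋ 0 (1 : H) = 1 := by
  rw [GradedAlgebra.proj_apply, DirectSum.decompose_of_mem_same ℋ (SetLike.one_mem_graded ℋ)]

lemma tQ_zero_mul (x y : MvPolynomial (Fin nv) K ⊗[K] H) :
    tQ ℋ 0 (x * y) = tQ ℋ 0 x * tQ ℋ 0 y := by
  rw [tQ_mul, Finset.sum_range_one]

lemma tQ_zero_pow (x : MvPolynomial (Fin nv) K ⊗[K] H) (n : ℕ) :
    tQ ℋ 0 (x ^ n) = tQ ℋ 0 x ^ n := by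
  induction n with
  | zero =>
    rw [pow_zero, pow_zero, Algebra.TensorProduct.one_def, tQ_tmul, proj_zero_one]
  | succ n ih => rw [pow_succ, pow_succ, tQ_zero_mul, ih]

lemma tQ_zero_nilpotent (hH0 : ℋ 0 = Submodule.span K {(1 : H)})
    (hinj : ∀ r : MvPolynomial (Fin nv) K, r ⊗ₜ[K] (1 : H) = 0 → r = 0)
    {z : MvPolynomial (Fin nv) K ⊗[K] H} (hz : IsNilpotent z) : tQ ℋ 0 z = 0 := by
  have hex : ∀ z : MvPolynomial (Fin nv) K ⊗[K] H,
      ∃ r : MvPolynomial (Fin nv) K, tQ ℋ 0 z = r ⊗ₜ[K] (1 : H) := by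
    intro z
    induction z using TensorProduct.induction_on with
    | zero => exact ⟨0, by simp⟩
    | tmul p h =>
      have hmem : GradedAlgebra.proj ℋ 0 h ∈ ℋ 0 := by
        rw [GradedAlgebra.proj_apply]; exact SetLike.coe_mem _
      rw [hH0, Submodule.mem_span_singleton] at hmem
      obtain ⟨c, hc⟩ := hmem
      refine ⟨c • p, ?_⟩
      rw [tQ_tmul, ← hc, tmul_smul, smul_tmul']
    | add z1 z2 h1 h2 =>
      obtain ⟨r1, e1⟩ := h1; obtain ⟨r2, e2⟩ := h2
      exact ⟨r1 + r2, by rw [map_add, e1, e2, add_tmul]⟩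
  obtain ⟨r, hr⟩ := hex z
  obtain ⟨n, hn⟩ := hz
  have h0 : (r ⊗ₜ[K] (1 : H)) ^ n = 0 := by
    rw [← hr, ← tQ_zero_pow, hn, map_zero]
  rw [Algebra.TensorProduct.tmul_pow, one_pow] at h0
  have hrn : r ^ n = 0 := hinj _ h0
  have hr0 : r = 0 := IsNilpotent.eq_zero ⟨n, hrn⟩
  rw [hr, hr0, zero_tmul]

/-- Elements spanned by (degree-`d` poly) ⊗ (degree-`j` elt). -/
noncomputable def pureGrade (d j : ℕ) : Submodule K (MvPolynomial (Fin nv) K ⊗[K] H) :=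
  Submodule.span K {z | ∃ p ∈ MvPolynomial.weightedHomogeneousSubmodule K w d,
    ∃ h ∈ ℋ j, z = p ⊗ₜ[K] h}

lemma tQ_mem_pureGrade {m : ℕ} {z : MvPolynomial (Fin nv) K ⊗[K] H}
    (hz : z ∈ tensorGrade w ℋ m) (j : ℕ) : tQ ℋ j z ∈ pureGrade w ℋ (m - j) j := by
  induction hz using Submodule.span_induction with
  | mem x hx =>
    obtain ⟨i', j', hij, p, hp, h, hh, rfl⟩ := hx
    rw [tQ_tmul]
    by_cases hjj : j' = j
    · subst hjj
      rw [GradedAlgebra.proj_apply, DirectSum.decompose_of_mem_same ℋ hh]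
      refine Submodule.subset_span ⟨p, ?_, h, hh, rfl⟩
      rwa [← hij, Nat.add_sub_cancel]
    · rw [GradedAlgebra.proj_apply, DirectSum.decompose_of_mem_ne ℋ hh hjj, tmul_zero]
      exact zero_mem _
  | zero => rw [map_zero]; exact zero_mem _
  | add x y _ _ hx hy => rw [map_add]; exact add_mem hx hy
  | smul c x _ hx => rw [map_smul]; exact Submodule.smul_mem _ _ hx

lemma tQ_eq_zero_of_lt {m : ℕ} {z : MvPolynomial (Fin nv) K ⊗[K] H}
    (hz : z ∈ tensorGrade w ℋ m) {j : ℕ} (hj : m < j) : tQ ℋ j z = 0 := by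
  induction hz using Submodule.span_induction with
  | mem x hx =>
    obtain ⟨i', j', hij, p, hp, h, hh, rfl⟩ := hx
    rw [tQ_tmul, GradedAlgebra.proj_apply, DirectSum.decompose_of_mem_ne ℋ hh (by omega),
      tmul_zero]
  | zero => rw [map_zero]
  | add x y _ _ hx hy => rw [map_add, hx, hy, add_zero]
  | smul c x _ hx => rw [map_smul, hx, smul_zero]

lemma exists_bound [FiniteDimensional K H] : ∃ N : ℕ, ∀ j, N < j → ℋ j = ⊥ := by
  have hind : iSupIndep ℋ := (DirectSum.Decomposition.isInternal ℋ).submodule_iSupIndep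
  have hfin : {j : ℕ | ℋ j ≠ ⊥}.Finite := by
    have : Finite {j : ℕ // ℋ j ≠ ⊥} := @Fintype.finite _ hind.fintypeNeBotOfFiniteDimensional
    rw [← Set.finite_coe_iff]
    exact this
  obtain ⟨N, hN⟩ := hfin.bddAbove
  refine ⟨N, fun j hj => ?_⟩
  by_contra h
  exact absurd (hN (show j ∈ {j : ℕ | ℋ j ≠ ⊥} from h)) (by omega)

lemma sum_tQ {N : ℕ} (hN : ∀ j, N < j → ℋ j = ⊥) (z : MvPolynomial (Fin nv) K ⊗[K] H) :
    z = ∑ j ∈ Finset.range (N + 1), tQ ℋ j z := by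
  classical
  have hh : ∀ h : H, ∑ j ∈ Finset.range (N + 1), GradedAlgebra.proj ℋ j h = h := by
    intro h
    conv_rhs => rw [← DirectSum.sum_support_decompose ℋ h]
    refine (Finset.sum_subset ?_ ?_).symm
    · intro j hj
      rw [DFinsupp.mem_support_iff] at hj
      rw [Finset.mem_range]
      by_contra hc
      refine hj (Subtype.ext ?_)
      have hbot : ℋ j = ⊥ := hN j (by omega)
      have hmem := (DirectSum.decompose ℋ h j).2
      have h0 : ((DirectSum.decompose ℋ h j : ℋ j) : H) = 0 :=
        (Submodule.eq_bot_iff _).mp hbot _ hmem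
      simp [h0]
    · intro j _ hj
      rw [DFinsupp.notMem_support_iff] at hj
      rw [GradedAlgebra.proj_apply, hj, ZeroMemClass.coe_zero]
  induction z using TensorProduct.induction_on with
  | zero => simp
  | tmul p h =>
    conv_lhs => rw [← hh h, tmul_sum]
    exact Finset.sum_congr rfl fun j _ => by rw [tQ_tmul]
  | add z1 z2 h1 h2 =>
    calc z1 + z2 = ∑ j ∈ Finset.range (N + 1), (tQ ℋ j z1 + tQ ℋ j z2) := by
          rw [Finset.sum_add_distrib, ← h1, ← h2]
      _ = _ := Finset.sum_congr rfl fun j _ => by rw [map_add]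

end Aux

set_option maxHeartbeats 2000000 in
/-- Two-factor uniqueness: in `A = K[x₁,…,x_n] ⊗ H` (weights positive, `H` connected
finite-dimensional nonnegatively graded), if `a·b = a'·b'` for homogeneous elements with
`a - f⊗1, a' - f⊗1, b - g⊗1, b' - g⊗1` nilpotent and `f, g` homogeneous coprime, then
`a = a'` and `b = b'`. -/
theorem stmt_7 {nv : ℕ} (w : Fin nv → ℕ) (hw : ∀ i, 0 < w i)
    (ℋ : ℕ → Submodule K H) [GradedAlgebra ℋ]
    (hH0 : ℋ 0 = Submodule.span K {(1 : H)}) [FiniteDimensional K H]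
    (f g : MvPolynomial (Fin nv) K) (df dg : ℕ)
    (hf : f ∈ MvPolynomial.weightedHomogeneousSubmodule K w df)
    (hg : g ∈ MvPolynomial.weightedHomogeneousSubmodule K w dg)
    (hfg : IsRelPrime f g)
    (a b a' b' : MvPolynomial (Fin nv) K ⊗[K] H)
    (ha : ∃ m, a ∈ tensorGrade w ℋ m) (hb : ∃ m, b ∈ tensorGrade w ℋ m)
    (ha' : ∃ m, a' ∈ tensorGrade w ℋ m) (hb' : ∃ m, b' ∈ tensorGrade w ℋ m)
    (hmul : a * b = a' * b')
    (hna : IsNilpotent (a - f ⊗ₜ[K] (1 : H)))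
    (hna' : IsNilpotent (a' - f ⊗ₜ[K] (1 : H)))
    (hnb : IsNilpotent (b - g ⊗ₜ[K] (1 : H)))
    (hnb' : IsNilpotent (b' - g ⊗ₜ[K] (1 : H))) :
    a = a' ∧ b = b' := by
  classical
  by_cases htriv : (1 : H) = 0
  · have h10 : (1 : MvPolynomial (Fin nv) K ⊗[K] H) = 0 := by
      rw [Algebra.TensorProduct.one_def, htriv, tmul_zero]
    haveI := subsingleton_of_zero_eq_one h10.symm
    exact ⟨Subsingleton.elim _ _, Subsingleton.elim _ _⟩
  obtain ⟨mA, haG⟩ := ha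
  obtain ⟨mB, hbG⟩ := hb
  obtain ⟨mA', haG'⟩ := ha'
  obtain ⟨mB', hbG'⟩ := hb'
  set B := Module.Free.chooseBasis K H with hB
  set E : (MvPolynomial (Fin nv) K ⊗[K] H) ≃ₗ[K]
      (Module.Free.ChooseBasisIndex K H →₀ MvPolynomial (Fin nv) K) :=
    TensorProduct.equivFinsuppOfBasisRight B with hEdef
  have hEt : ∀ (p : MvPolynomial (Fin nv) K) (h : H) i, E (p ⊗ₜ[K] h) i = B.repr h i • p :=
    fun p h i => TensorProduct.equivFinsuppOfBasisRight_apply_tmul_apply B p h i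
  have hsep : ∀ z : MvPolynomial (Fin nv) K ⊗[K] H, (∀ i, E z i = 0) → z = 0 := by
    intro z hz
    have h0 : E z = 0 := Finsupp.ext hz
    exact E.map_eq_zero_iff.mp h0
  obtain ⟨i0, hi0⟩ : ∃ i, B.repr 1 i ≠ 0 := by
    by_contra hall
    push_neg at hall
    refine htriv (B.repr.injective ?_)
    rw [map_zero]
    exact Finsupp.ext hall
  have hinj : ∀ r : MvPolynomial (Fin nv) K, r ⊗ₜ[K] (1 : H) = 0 → r = 0 := by
    intro r hr
    have h1 : B.repr 1 i0 • r = 0 := by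
      have := congrArg (fun z => E z i0) hr
      simpa [hEt] using this
    rcases smul_eq_zero.mp h1 with h | h
    · exact absurd h hi0
    · exact h
  have hmulE : ∀ (c : MvPolynomial (Fin nv) K) (z : MvPolynomial (Fin nv) K ⊗[K] H) i,
      E ((c ⊗ₜ[K] (1 : H)) * z) i = c * E z i := by
    intro c z i
    induction z using TensorProduct.induction_on with
    | zero => simp
    | tmul p h =>
      rw [Algebra.TensorProduct.tmul_mul_tmul, one_mul, hEt, hEt]
      exact (mul_smul_comm _ _ _).symm
    | add z1 z2 h1 h2 =>
      rw [mul_add, map_add, Finsupp.add_apply, h1, h2, map_add, Finsupp.add_apply, mul_add]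
  have hhomE : ∀ {d j : ℕ} (z : MvPolynomial (Fin nv) K ⊗[K] H), z ∈ pureGrade w ℋ d j →
      ∀ i, E z i ∈ MvPolynomial.weightedHomogeneousSubmodule K w d := by
    intro d j z hz i
    induction hz using Submodule.span_induction with
    | mem x hx =>
      obtain ⟨p, hp, h, hh, rfl⟩ := hx
      rw [hEt]
      exact Submodule.smul_mem _ _ hp
    | zero => rw [map_zero, Finsupp.coe_zero, Pi.zero_apply]; exact zero_mem _
    | add x y _ _ hx hy => rw [map_add, Finsupp.add_apply]; exact add_mem hx hy
    | smul c x _ hx => rw [map_smul, Finsupp.smul_apply]; exact Submodule.smul_mem _ _ hx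
  have hcancel : ∀ c : MvPolynomial (Fin nv) K, c ≠ 0 →
      ∀ x y : MvPolynomial (Fin nv) K ⊗[K] H,
      (c ⊗ₜ[K] (1 : H)) * x = (c ⊗ₜ[K] (1 : H)) * y → x = y := by
    intro c hc x y hxy
    rw [← sub_eq_zero]
    apply hsep
    intro i
    have h0 : E ((c ⊗ₜ[K] (1 : H)) * (x - y)) i = 0 := by
      rw [mul_sub, hxy, sub_self, map_zero, Finsupp.coe_zero, Pi.zero_apply]
    rw [hmulE] at h0
    exact (mul_eq_zero.mp h0).resolve_left hc
  obtain ⟨N, hN⟩ := exists_bound ℋ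
  have hQ0 : ∀ (x : MvPolynomial (Fin nv) K ⊗[K] H) (c : MvPolynomial (Fin nv) K),
      IsNilpotent (x - c ⊗ₜ[K] (1 : H)) → tQ ℋ 0 x = c ⊗ₜ[K] (1 : H) := by
    intro x c hx
    have h1 : tQ ℋ 0 (x - c ⊗ₜ[K] (1 : H)) = 0 := tQ_zero_nilpotent ℋ hH0 hinj hx
    rw [map_sub, tQ_tmul, proj_zero_one ℋ, sub_eq_zero] at h1
    exact h1
  have hQa : tQ ℋ 0 a = f ⊗ₜ[K] (1 : H) := hQ0 a f hna
  have hQa' : tQ ℋ 0 a' = f ⊗ₜ[K] (1 : H) := hQ0 a' f hna'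
  have hQb : tQ ℋ 0 b = g ⊗ₜ[K] (1 : H) := hQ0 b g hnb
  have hQb' : tQ ℋ 0 b' = g ⊗ₜ[K] (1 : H) := hQ0 b' g hnb'
  have hdeg : ∀ (x : MvPolynomial (Fin nv) K ⊗[K] H) (m : ℕ) (c : MvPolynomial (Fin nv) K),
      x ∈ tensorGrade w ℋ m → tQ ℋ 0 x = c ⊗ₜ[K] (1 : H) →
      c ∈ MvPolynomial.weightedHomogeneousSubmodule K w m := by
    intro x m c hxm hx0
    have h1 := tQ_mem_pureGrade w ℋ hxm 0
    rw [Nat.sub_zero, hx0] at h1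
    have h2 := hhomE _ h1 i0
    rw [hEt] at h2
    have h3 := Submodule.smul_mem (MvPolynomial.weightedHomogeneousSubmodule K w m)
      (B.repr 1 i0)⁻¹ h2
    rwa [inv_smul_smul₀ hi0] at h3
  have hrigid : ∀ (x : MvPolynomial (Fin nv) K ⊗[K] H) (m : ℕ) (c : MvPolynomial (Fin nv) K),
      x ∈ tensorGrade w ℋ m → tQ ℋ 0 x = c ⊗ₜ[K] (1 : H) → IsUnit c →
      x = c ⊗ₜ[K] (1 : H) := by
    intro x m c hxm hx0 hcu
    have hm : m = 0 := unit_deg (hdeg x m c hxm hx0) hcu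
    subst hm
    have hsum : ∑ j ∈ Finset.range (N + 1), tQ ℋ j x = tQ ℋ 0 x := by
      refine Finset.sum_eq_single_of_mem 0 (Finset.mem_range.mpr (by omega)) ?_
      intro j _ hj
      exact tQ_eq_zero_of_lt w ℋ hxm (Nat.pos_of_ne_zero hj)
    rw [sum_tQ ℋ hN x, hsum, hx0]
  by_cases hug : IsUnit g
  · have hzg : g ≠ 0 := hug.ne_zero
    have hbb : b = g ⊗ₜ[K] (1 : H) := hrigid b mB g hbG hQb hug
    have hbb' : b' = g ⊗ₜ[K] (1 : H) := hrigid b' mB' g hbG' hQb' hug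
    refine ⟨hcancel g hzg a a' ?_, hbb.trans hbb'.symm⟩
    calc (g ⊗ₜ[K] (1 : H)) * a = a * b := by rw [hbb, mul_comm]
      _ = a' * b' := hmul
      _ = (g ⊗ₜ[K] (1 : H)) * a' := by rw [hbb', mul_comm]
  by_cases huf : IsUnit f
  · have hzf : f ≠ 0 := huf.ne_zero
    have haa : a = f ⊗ₜ[K] (1 : H) := hrigid a mA f haG hQa huf
    have haa' : a' = f ⊗ₜ[K] (1 : H) := hrigid a' mA' f haG' hQa' huf
    refine ⟨haa.trans haa'.symm, hcancel f hzf b b' ?_⟩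
    calc (f ⊗ₜ[K] (1 : H)) * b = a * b := by rw [haa]
      _ = a' * b' := hmul
      _ = (f ⊗ₜ[K] (1 : H)) * b' := by rw [haa']
  -- main case
  have hf0 : f ≠ 0 := fun h => hug (hfg (by rw [h]; exact dvd_zero g) dvd_rfl)
  have hg0 : g ≠ 0 := fun h => huf (hfg dvd_rfl (by rw [h]; exact dvd_zero f))
  have hdf1 : 0 < df := deg_pos hw hf huf hf0
  have hmadf : mA = df :=
    MvPolynomial.IsWeightedHomogeneous.inj_right hf0 (hdeg a mA f haG hQa) hf
  have hmadf' : mA' = df :=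
    MvPolynomial.IsWeightedHomogeneous.inj_right hf0 (hdeg a' mA' f haG' hQa') hf
  rw [hmadf] at haG
  rw [hmadf'] at haG'
  have hQu0 : tQ ℋ 0 (a - a') = 0 := by rw [map_sub, hQa, hQa', sub_self]
  have hQv0 : tQ ℋ 0 (b - b') = 0 := by rw [map_sub, hQb, hQb', sub_self]
  have hQumem : ∀ j, tQ ℋ j (a - a') ∈ pureGrade w ℋ (df - j) j := by
    intro j
    rw [map_sub]
    exact sub_mem (tQ_mem_pureGrade w ℋ haG j) (tQ_mem_pureGrade w ℋ haG' j)
  have key : ∀ j, tQ ℋ j (a - a') = 0 ∧ tQ ℋ j (b - b') = 0 := by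
    intro j
    induction j using Nat.strong_induction_on with
    | _ j ih =>
      rcases Nat.eq_zero_or_pos j with rfl | hj
      · exact ⟨hQu0, hQv0⟩
      have heq0 : (a - a') * b + a' * (b - b') = 0 := by
        have hx : (a - a') * b + a' * (b - b') = a * b - a' * b' := by ring
        rw [hx, hmul, sub_self]
      have hQsum : tQ ℋ j ((a - a') * b) = tQ ℋ j (a - a') * (g ⊗ₜ[K] (1 : H)) := by
        rw [tQ_mul]
        rw [Finset.sum_eq_single_of_mem j (Finset.self_mem_range_succ j)]
        · rw [Nat.sub_self, hQb]
        · intro i hi hij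
          rw [Finset.mem_range] at hi
          rw [(ih i (by omega)).1, zero_mul]
      have hQsum2 : tQ ℋ j (a' * (b - b')) = (f ⊗ₜ[K] (1 : H)) * tQ ℋ j (b - b') := by
        rw [tQ_mul]
        rw [Finset.sum_eq_single_of_mem 0 (Finset.mem_range.mpr (by omega))]
        · rw [Nat.sub_zero, hQa']
        · intro i hi hij
          rw [Finset.mem_range] at hi
          rw [(ih (j - i) (by omega)).2, mul_zero]
      have heq : tQ ℋ j (a - a') * (g ⊗ₜ[K] (1 : H)) + (f ⊗ₜ[K] (1 : H)) * tQ ℋ j (b - b')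
          = 0 := by
        rw [← hQsum, ← hQsum2, ← map_add, heq0, map_zero]
      have hcz : ∀ i, E (tQ ℋ j (a - a')) i = 0 ∧ E (tQ ℋ j (b - b')) i = 0 := by
        intro i
        have e1 : E (tQ ℋ j (a - a') * (g ⊗ₜ[K] (1 : H))) i = g * E (tQ ℋ j (a - a')) i := by
          rw [mul_comm]; exact hmulE g _ i
        have e2 : E ((f ⊗ₜ[K] (1 : H)) * tQ ℋ j (b - b')) i = f * E (tQ ℋ j (b - b')) i :=
          hmulE f _ i
        have h1 : g * E (tQ ℋ j (a - a')) i + f * E (tQ ℋ j (b - b')) i = 0 := by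
          have hc := congrArg (fun z => E z i) heq
          simp only [map_add, Finsupp.add_apply, map_zero, Finsupp.coe_zero,
            Pi.zero_apply] at hc
          rw [e1, e2] at hc
          exact hc
        have hzw : MvPolynomial.IsWeightedHomogeneous w (E (tQ ℋ j (a - a')) i) (df - j) :=
          hhomE _ (hQumem j) i
        have hfd : f ∣ E (tQ ℋ j (a - a')) i := by
          refine hfg.dvd_of_dvd_mul_left ⟨-(E (tQ ℋ j (b - b')) i), ?_⟩
          linear_combination h1
        have hz0 : E (tQ ℋ j (a - a')) i = 0 := degkill hf hzw (by omega) hfd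
        have hw0 : E (tQ ℋ j (b - b')) i = 0 := by
          rw [hz0, mul_zero, zero_add] at h1
          exact (mul_eq_zero.mp h1).resolve_left hf0
        exact ⟨hz0, hw0⟩
      exact ⟨hsep _ fun i => (hcz i).1, hsep _ fun i => (hcz i).2⟩
  constructor
  · rw [← sub_eq_zero]
    rw [sum_tQ ℋ hN (a - a')]
    exact Finset.sum_eq_zero fun j _ => (key j).1
  · rw [← sub_eq_zero]
    rw [sum_tQ ℋ hN (b - b')]
    exact Finset.sum_eq_zero fun j _ => (key j).2
end

section
/- Let K be a field, B a commutative K-algebra, P a commutative ring graded in nonnegative degrees, and C a graded commutative P-algebra that is generated as a P-module by finitely many homogeneous elements of degree ≤ d, with C graded in nonnegative degrees. Form A = B ⊗_K C. If x ∈ B ⊗_K C^{>0} (i.e., the component of x in B ⊗ C⁰ vanishes, where C^{>0} is the span of positive-degree homogeneous elements), then x^{d+1} lies in the ideal of A generated by 1 ⊗ (P⁺·C), where P⁺ ⊂ P is the ideal of positive-degree elements. In particular the image of x in A/(B ⊗ P⁺C) is nilpotent. -/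
open TensorProduct

/-- Let `C` be a graded `P`-algebra generated as a `P`-module by finitely many
homogeneous elements of degree ≤ `d`, and `A = B ⊗_K C`. If `x ∈ B ⊗ C^{>0}` then
`x^(d+1)` lies in the ideal of `A` generated by `1 ⊗ (P⁺·C)`; in particular `x` is
nilpotent modulo that ideal. -/
theorem stmt_10 (K B P C : Type*) [Field K] [CommRing B] [Algebra K B]
    [CommRing P] [CommRing C] [Algebra K C] [Algebra P C]
    (gP : ℕ → AddSubgroup P) [GradedRing gP]
    (gC : ℕ → Submodule K C) [GradedAlgebra gC]
    (hcompat : ∀ (n : ℕ) (p : P), p ∈ gP n → algebraMap P C p ∈ gC n)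
    (d : ℕ) (gens : Finset C)
    (hdeg : ∀ c ∈ gens, ∃ j ≤ d, c ∈ gC j)
    (hspan : Submodule.span P (gens : Set C) = ⊤)
    (x : B ⊗[K] C)
    (hx : x ∈ Submodule.span K
      {z : B ⊗[K] C | ∃ b : B, ∃ c : C, (∃ n, 0 < n ∧ c ∈ gC n) ∧ z = b ⊗ₜ[K] c}) :
    x ^ (d + 1) ∈ Ideal.map
        (Algebra.TensorProduct.includeRight : C →ₐ[K] B ⊗[K] C)
        (Ideal.span ((algebraMap P C) '' {p : P | ∃ n, 0 < n ∧ p ∈ gP n})) ∧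
    IsNilpotent (Ideal.Quotient.mk
      (Ideal.map (Algebra.TensorProduct.includeRight : C →ₐ[K] B ⊗[K] C)
        (Ideal.span ((algebraMap P C) '' {p : P | ∃ n, 0 < n ∧ p ∈ gP n}))) x) := by
  classical
  set J : Ideal C := Ideal.span ((algebraMap P C) '' {p : P | ∃ n, 0 < n ∧ p ∈ gP n}) with hJ
  set I : Ideal (B ⊗[K] C) :=
    Ideal.map (Algebra.TensorProduct.includeRight : C →ₐ[K] B ⊗[K] C) J with hI
  -- Core graded lemma: every component of degree > d of any element of C lies in J.
  have hproj : ∀ y : C, ∀ m : ℕ, d < m → (DirectSum.decompose gC y m : C) ∈ J := by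
    intro y
    have hy : y ∈ Submodule.span P (gens : Set C) := by rw [hspan]; trivial
    induction hy using Submodule.span_induction with
    | mem g hg =>
      intro m hm
      obtain ⟨j, hjd, hgj⟩ := hdeg g hg
      rw [DirectSum.decompose_of_mem_ne gC hgj (by omega : j ≠ m)]
      exact J.zero_mem
    | zero => intro m _; simp
    | add a b _ _ iha ihb =>
      intro m hm
      have := J.add_mem (iha m hm) (ihb m hm)
      rw [DirectSum.decompose_add]
      simpa using this
    | smul p y _ ih =>
      intro m hm
      rw [Algebra.smul_def]
      have hps : (algebraMap P C) p * y =
          ∑ k ∈ (DirectSum.decompose gP p).support,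
            (algebraMap P C) (DirectSum.decompose gP p k : P) * y := by
        rw [← Finset.sum_mul, ← map_sum, DirectSum.sum_support_decompose gP p]
      rw [hps, DirectSum.decompose_sum, DFinsupp.finset_sum_apply,
        AddSubmonoidClass.coe_finset_sum]
      refine J.sum_mem (fun k _ => ?_)
      have hk : ((DirectSum.decompose gP p k : P)) ∈ gP k := SetLike.coe_mem _
      have hak : algebraMap P C (DirectSum.decompose gP p k : P) ∈ gC k := hcompat k _ hk
      by_cases hkm : k ≤ m
      · rw [DirectSum.coe_decompose_mul_of_left_mem_of_le gC hak hkm]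
        rcases Nat.eq_zero_or_pos k with hk0 | hk0
        · subst hk0
          exact J.mul_mem_left _ (ih m (by omega))
        · refine J.mul_mem_right _ ?_
          exact Ideal.subset_span ⟨_, ⟨k, hk0, hk⟩, rfl⟩
      · rw [DirectSum.coe_decompose_mul_of_left_mem_of_not_le gC hak hkm]
        exact J.zero_mem
  -- hence homogeneous elements of degree > d are in J
  have hhom : ∀ (c : C) (n : ℕ), d < n → c ∈ gC n → c ∈ J := by
    intro c n hn hc
    have := hproj c n hn
    rwa [DirectSum.decompose_of_mem_same gC hc] at this
  -- filtration of K-submodules of the tensor product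
  set M : ℕ → Submodule K (B ⊗[K] C) := fun i =>
    Submodule.span K {z : B ⊗[K] C | ∃ b : B, ∃ c : C,
      (∃ n, i ≤ n ∧ 0 < n ∧ c ∈ gC n) ∧ z = b ⊗ₜ[K] c} with hM
  have hxM : x ∈ M 1 := by
    refine Submodule.span_mono ?_ hx
    rintro z ⟨b, c, ⟨n, hn, hc⟩, rfl⟩
    exact ⟨b, c, ⟨n, hn, hn, hc⟩, rfl⟩
  have hmul : ∀ i j, M i * M j ≤ M (i + j) := by
    intro i j
    rw [hM]
    rw [Submodule.span_mul_span]
    rw [Submodule.span_le]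
    rintro z ⟨z1, ⟨b, c, ⟨n, hn, hn0, hc⟩, rfl⟩, z2, ⟨b', c', ⟨n', hn', hn0', hc'⟩, rfl⟩, rfl⟩
    show (b ⊗ₜ[K] c) * (b' ⊗ₜ[K] c') ∈ _
    refine Submodule.subset_span ?_
    refine ⟨b * b', c * c', ⟨n + n', by omega, by omega, SetLike.mul_mem_graded hc hc'⟩, ?_⟩
    rw [Algebra.TensorProduct.tmul_mul_tmul]
  have hpow : ∀ k : ℕ, M 1 ^ (k + 1) ≤ M (k + 1) := by
    intro k
    induction k with
    | zero => rw [pow_one]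
    | succ k ih =>
      calc M 1 ^ (k + 2) = M 1 ^ (k + 1) * M 1 := by rw [pow_succ]
        _ ≤ M (k + 1) * M 1 := mul_le_mul' ih le_rfl
        _ ≤ M (k + 2) := hmul (k + 1) 1
  have hMI : M (d + 1) ≤ I.restrictScalars K := by
    rw [hM, Submodule.span_le]
    rintro z ⟨b, c, ⟨n, hn, hn0, hc⟩, rfl⟩
    have hcJ : c ∈ J := hhom c n (by omega) hc
    have h1 : (Algebra.TensorProduct.includeRight : C →ₐ[K] B ⊗[K] C) c ∈ I :=
      Ideal.mem_map_of_mem _ hcJ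
    have : b ⊗ₜ[K] c = (b ⊗ₜ[K] (1 : C)) * ((1 : B) ⊗ₜ[K] c) := by
      rw [Algebra.TensorProduct.tmul_mul_tmul, mul_one, one_mul]
    rw [SetLike.mem_coe, Submodule.restrictScalars_mem, this]
    exact I.mul_mem_left _ h1
  have hmem : x ^ (d + 1) ∈ I := by
    have := hpow d (Submodule.pow_mem_pow _ hxM (d + 1))
    exact hMI this
  refine ⟨hmem, ⟨d + 1, ?_⟩⟩
  rw [← map_pow, Ideal.Quotient.eq_zero_iff_mem]
  exact hmem
end

section
/- Let D be a commutative integral domain and A = A₁ × ⋯ × A_k a product of commutative D-algebras, where each A_m = D ⊗ H_m with H_m = D·1 ⊕ H_m⁺ a decomposition such that D ⊗ H_m⁺ is a nilpotent ideal of A_m. Fix i and let τ ∈ A be an element whose component in A_j is zero for all j ≠ i and whose component in A_i is not nilpotent. Then for x ∈ A and f ∈ D, the element (f·1 − x)·τ is nilpotent in A if and only if the D-component (i.e., the D ⊗ 1 part) of the i-th component of x equals f. -/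
/-- Detection of restrictions via local Thom classes. Each factor `A m` is a
`D`-algebra of the form `D·1 ⊕ I m` with `I m` a nilpotent ideal, and `πD m` reads off
the `D`-component. If `τ` is supported on the factor `i` with non-nilpotent component
there, then `(f·1 − x)·τ` is nilpotent iff the `D`-component of `x i` equals `f`. -/
theorem stmt_11 (D : Type*) [CommRing D] [IsDomain D] (k : ℕ)
    (A : Fin k → Type*) [∀ m, CommRing (A m)] [∀ m, Algebra D (A m)]
    (I : ∀ m, Ideal (A m)) (hInil : ∀ m, IsNilpotent (I m))
    (piD : ∀ m, A m → D)
    (hdec : ∀ m (a : A m), a - algebraMap D (A m) (piD m a) ∈ I m)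
    (hdisj : ∀ m (c : D), algebraMap D (A m) c ∈ I m → c = 0)
    (i : Fin k) (τ : ∀ m, A m)
    (hτ0 : ∀ j, j ≠ i → τ j = 0) (hτi : ¬ IsNilpotent (τ i))
    (x : ∀ m, A m) (f : D) :
    IsNilpotent (((fun m => algebraMap D (A m) f) - x) * τ) ↔ piD i (x i) = f := by
  obtain ⟨N, hN⟩ := hInil i
  -- every element of I i is nilpotent
  have memNil : ∀ w ∈ I i, IsNilpotent w := by
    intro w hw
    refine ⟨N, ?_⟩
    have := Ideal.pow_mem_pow hw N
    rw [hN] at this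
    simpa using this
  -- algebraMap of c nilpotent implies c = 0
  have algnil : ∀ c : D, IsNilpotent (algebraMap D (A i) c) → c = 0 := by
    rintro c ⟨n, hn⟩
    rcases Nat.eq_zero_or_pos n with rfl | hnpos
    · simp only [pow_zero] at hn
      have : algebraMap D (A i) c ∈ I i := by
        have : algebraMap D (A i) c = 0 := by
          calc algebraMap D (A i) c = algebraMap D (A i) c * 1 := by ring
            _ = 0 := by rw [hn]; ring
        rw [this]; exact Ideal.zero_mem _
      exact hdisj i c this
    · have h1 : algebraMap D (A i) (c ^ n) ∈ I i := by
        rw [map_pow, hn]; exact Ideal.zero_mem _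
      have h2 := hdisj i _ h1
      exact pow_eq_zero_iff hnpos.ne' |>.mp h2
  -- key : algebraMap c + (elt of I i) nilpotent ↔ c = 0
  have key : ∀ (c : D) (a : A i), a - algebraMap D (A i) c ∈ I i →
      (IsNilpotent a ↔ c = 0) := by
    intro c a ha
    constructor
    · intro hnil
      have hw : IsNilpotent (a - algebraMap D (A i) c) := memNil _ ha
      have : IsNilpotent (algebraMap D (A i) c) := by
        have := (Commute.all a (a - algebraMap D (A i) c)).isNilpotent_sub hnil hw
        simpa using this
      exact algnil c this
    · rintro rfl
      simp only [map_zero, sub_zero] at ha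
      exact memNil a ha
  set g := piD i (x i) with hg
  set t := piD i (τ i) with ht
  have htne : t ≠ 0 := by
    intro h0
    apply hτi
    have := hdec i (τ i)
    rw [← ht, h0, map_zero, sub_zero] at this
    exact memNil _ this
  set b : A i := (algebraMap D (A i) f - x i) * τ i with hb
  -- D-component of b is (f-g)*t
  have hbmem : b - algebraMap D (A i) ((f - g) * t) ∈ I i := by
    rw [← Ideal.Quotient.eq]
    have hx : Ideal.Quotient.mk (I i) (x i)
        = Ideal.Quotient.mk (I i) (algebraMap D (A i) g) :=
      Ideal.Quotient.eq.mpr (hdec i (x i))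
    have hτ : Ideal.Quotient.mk (I i) (τ i)
        = Ideal.Quotient.mk (I i) (algebraMap D (A i) t) :=
      Ideal.Quotient.eq.mpr (hdec i (τ i))
    simp only [hb, map_mul, map_sub, hx, hτ]
  have hbnil : IsNilpotent b ↔ g = f := by
    rw [key _ _ hbmem, mul_eq_zero]
    constructor
    · rintro (h | h)
      · linear_combination -h
      · exact absurd h htne
    · intro h; left; rw [h]; ring
  rw [← hbnil]
  -- relate nilpotency in the product to nilpotency of component i
  constructor
  · rintro ⟨n, hn⟩
    refine ⟨n, ?_⟩
    have := congrFun hn i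
    simpa [hb] using this
  · rintro ⟨n, hn⟩
    refine ⟨n + 1, ?_⟩
    funext j
    rcases eq_or_ne j i with rfl | hji
    · show ((algebraMap D (A j) f - x j) * τ j) ^ (n + 1) = 0
      rw [pow_succ, ← hb, hn, zero_mul]
    · show ((algebraMap D (A j) f - x j) * τ j) ^ (n + 1) = 0
      rw [hτ0 j hji, mul_zero, zero_pow (Nat.succ_ne_zero n)]
end
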